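/- arXiv:2206.04639 — 2 statements merged into one kernel-verified Lean document; each statement's English description precedes it below -/
import Mathlib

section
/- Let 1 ≤ k < l ≤ n and let κ ∈ ℝⁿ satisfy H_j(κ) > 0 for all 1 ≤ j ≤ l, where H_j(κ) = σ_j(κ)/C(n,j) is the normalized j-th elementary symmetric polynomial. Then H_k(κ) · H_{l-1}(κ) ≥ H_{k-1}(κ) · H_l(κ), with equality if and only if κ = λ(1,…,1) for some λ > 0. -/
namespace NewtonAux

/-- normalized elementary symmetric function of a multiset -/
noncomputable def Hm (j : ℕ) (s : Multiset ℝ) : ℝ :=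
  s.esymm j / ((Multiset.card s).choose j : ℝ)


lemma esymm_zero' (s : Multiset ℝ) : s.esymm 0 = 1 := by simp [Multiset.esymm]

lemma esymm_cons (a : ℝ) (s : Multiset ℝ) (j : ℕ) :
    (a ::ₘ s).esymm (j + 1) = s.esymm (j + 1) + a * s.esymm j := by
  simp [Multiset.esymm, Multiset.powersetCard_cons, Multiset.sum_map_mul_left,
    Multiset.map_map, Function.comp]

lemma esymm_of_lt {s : Multiset ℝ} {j : ℕ} (h : Multiset.card s < j) : s.esymm j = 0 := by
  simp [Multiset.esymm, Multiset.powersetCard_eq_empty _ h]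

lemma esymm_card (s : Multiset ℝ) : s.esymm (Multiset.card s) = s.prod := by
  induction s using Multiset.induction with
  | empty => simp [Multiset.esymm]
  | cons a s ih =>
      rw [Multiset.card_cons, esymm_cons, ih, esymm_of_lt (Nat.lt_succ_self _),
        Multiset.prod_cons, zero_add]

lemma esymm_inv (s : Multiset ℝ) (h : ∀ a ∈ s, a ≠ 0) :
    ∀ j, j ≤ Multiset.card s →
      s.prod * ((s.map (fun a => a⁻¹)).esymm j) = s.esymm (Multiset.card s - j) := by
  induction s using Multiset.induction with
  | empty =>
      intro j hj
      have hj0 : j = 0 := by simpa using hj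
      subst hj0
      simp [esymm_zero']
  | cons a s ih =>
      intro j hj
      have ha : a ≠ 0 := h a (Multiset.mem_cons_self a s)
      have hs : ∀ b ∈ s, b ≠ 0 := fun b hb => h b (Multiset.mem_cons_of_mem hb)
      rw [Multiset.card_cons] at hj ⊢
      match j with
      | 0 =>
          simp only [esymm_zero', mul_one, Nat.sub_zero]
          rw [← Multiset.card_cons a s, esymm_card, Multiset.prod_cons]
      | (j' + 1) =>
          rw [Multiset.map_cons, esymm_cons, Multiset.prod_cons]
          rcases Nat.lt_or_ge j' (Multiset.card s) with hlt | hge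
          · have e1 := ih hs (j' + 1) hlt
            have e2 := ih hs j' (le_of_lt hlt)
            have hcard : Multiset.card s + 1 - (j' + 1) = (Multiset.card s - (j' + 1)) + 1 := by
              omega
            rw [hcard, esymm_cons]
            have hsub : Multiset.card s - j' = Multiset.card s - (j' + 1) + 1 := by omega
            rw [hsub] at e2
            calc a * s.prod * ((Multiset.map (fun a => a⁻¹) s).esymm (j' + 1)
                  + a⁻¹ * (Multiset.map (fun a => a⁻¹) s).esymm j')
                = a * (s.prod * (Multiset.map (fun a => a⁻¹) s).esymm (j' + 1))
                  + (a * a⁻¹) * (s.prod * (Multiset.map (fun a => a⁻¹) s).esymm j') := by ring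
              _ = a * s.esymm (Multiset.card s - (j' + 1))
                  + 1 * s.esymm (Multiset.card s - (j' + 1) + 1) := by
                  rw [e1, e2, mul_inv_cancel₀ ha]
              _ = s.esymm (Multiset.card s - (j' + 1) + 1)
                  + a * s.esymm (Multiset.card s - (j' + 1)) := by ring
          · have hj' : j' = Multiset.card s := by omega
            subst hj'
            have e2 := ih hs (Multiset.card s) le_rfl
            rw [Nat.sub_self, esymm_zero'] at e2
            have hv : (Multiset.map (fun a => a⁻¹) s).esymm (Multiset.card s + 1) = 0 := by
              apply esymm_of_lt
              rw [Multiset.card_map]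
              omega
            rw [hv, Nat.sub_self, esymm_zero']
            calc a * s.prod * (0 + a⁻¹ * (Multiset.map (fun a => a⁻¹) s).esymm (Multiset.card s))
                = (a * a⁻¹) * (s.prod * (Multiset.map (fun a => a⁻¹) s).esymm (Multiset.card s)) := by
                  ring
              _ = 1 := by rw [e2, mul_inv_cancel₀ ha, one_mul]

lemma esymm_one (s : Multiset ℝ) : s.esymm 1 = s.sum := by
  simp [Multiset.esymm, Multiset.powersetCard_one, Multiset.map_map, Function.comp]

lemma sq_sum (s : Multiset ℝ) :
    s.sum ^ 2 = (s.map (fun a => a ^ 2)).sum + 2 * s.esymm 2 := by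
  induction s using Multiset.induction with
  | empty => simp [esymm_of_lt]; exact esymm_of_lt (by simp)
  | cons a s ih =>
      rw [Multiset.sum_cons, Multiset.map_cons, Multiset.sum_cons]
      have := esymm_cons a s 1
      rw [this, esymm_one]
      ring_nf
      ring_nf at ih
      linarith [ih]


lemma expand_sum (a : ℝ) (s : Multiset ℝ) :
    (s.map (fun b => (a - b) ^ 2)).sum
      = (Multiset.card s : ℝ) * a ^ 2 - 2 * a * s.sum + (s.map (fun b => b ^ 2)).sum := by
  induction s using Multiset.induction with
  | empty => simp
  | cons x s ih =>
      simp only [Multiset.map_cons, Multiset.sum_cons, Multiset.card_cons, ih]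
      push_cast
      ring

lemma pair_sum (s : Multiset ℝ) :
    (s.bind (fun a => s.map (fun b => (a - b) ^ 2))).sum
      = 2 * ((Multiset.card s : ℝ) * (s.map (fun a => a ^ 2)).sum - s.sum ^ 2) := by
  have key : ∀ (t s : Multiset ℝ),
      (t.bind (fun a => s.map (fun b => (a - b) ^ 2))).sum
        = (Multiset.card s : ℝ) * (t.map (fun a => a ^ 2)).sum
          - 2 * t.sum * s.sum + (Multiset.card t : ℝ) * (s.map (fun b => b ^ 2)).sum := by
    intro t s
    induction t using Multiset.induction with
    | empty => simp
    | cons x t ih =>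
        simp only [Multiset.cons_bind, Multiset.sum_add, Multiset.map_cons, Multiset.sum_cons,
          Multiset.card_cons, ih, expand_sum]
        push_cast
        ring
  rw [key s s]
  ring

lemma cs (s : Multiset ℝ) : s.sum ^ 2 ≤ (Multiset.card s : ℝ) * (s.map (fun a => a ^ 2)).sum := by
  have h := pair_sum s
  have h0 : (0:ℝ) ≤ (s.bind (fun a => s.map (fun b => (a - b) ^ 2))).sum := by
    apply Multiset.sum_nonneg
    intro x hx
    rw [Multiset.mem_bind] at hx
    obtain ⟨a, -, hx⟩ := hx
    rw [Multiset.mem_map] at hx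
    obtain ⟨b, -, rfl⟩ := hx
    positivity
  nlinarith
lemma cs_eq {s : Multiset ℝ}
    (h : s.sum ^ 2 = (Multiset.card s : ℝ) * (s.map (fun a => a ^ 2)).sum)
    (hs : s ≠ 0) : ∃ c, s = Multiset.replicate (Multiset.card s) c := by
  have hp := pair_sum s
  have hz : (s.bind (fun a => s.map (fun b => (a - b) ^ 2))).sum = 0 := by rw [hp, h]; ring
  have hall : ∀ x ∈ s.bind (fun a => s.map (fun b => (a - b) ^ 2)), x = 0 := by
    intro x hx
    have hnn : ∀ y ∈ s.bind (fun a => s.map (fun b => (a - b) ^ 2)), (0:ℝ) ≤ y := by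
      intro y hy
      rw [Multiset.mem_bind] at hy
      obtain ⟨a, -, hy⟩ := hy
      rw [Multiset.mem_map] at hy
      obtain ⟨b, -, rfl⟩ := hy
      positivity
    have h1 : x ≤ 0 := hz ▸ Multiset.single_le_sum hnn x hx
    exact le_antisymm h1 (hnn x hx)
  obtain ⟨c, hc⟩ := Multiset.exists_mem_of_ne_zero hs
  refine ⟨c, (Multiset.eq_replicate.2 ⟨rfl, fun b hb => ?_⟩)⟩
  have : (b - c) ^ 2 = 0 := by
    apply hall
    rw [Multiset.mem_bind]
    exact ⟨b, hb, Multiset.mem_map.2 ⟨c, hc, rfl⟩⟩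
  have := pow_eq_zero_iff (n := 2) (by norm_num) |>.1 this
  linarith [sub_eq_zero.1 this]

lemma choose_id {n j : ℕ} (h : j + 1 ≤ n) :
    (n - j) * n.choose j = n * (n - 1).choose j := by
  have h1 := Nat.add_one_mul_choose_eq (n - 1) (n - 1 - j)
  have e1 : n - 1 + 1 = n := by omega
  have e2 : n - 1 - j + 1 = n - j := by omega
  rw [e1, e2] at h1
  rw [Nat.choose_symm (by omega : j ≤ n - 1)] at h1
  rw [← Nat.choose_symm (by omega : j ≤ n), h1]
  ring

lemma deriv_step (s : Multiset ℝ) (hn : 2 ≤ Multiset.card s) :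
    ∃ t : Multiset ℝ, Multiset.card t = Multiset.card s - 1 ∧
      ∀ j, j ≤ Multiset.card s - 1 → Hm j t = Hm j s := by
  classical
  set n := Multiset.card s with hns
  set p : Polynomial ℝ := (s.map fun a => Polynomial.X - Polynomial.C a).prod with hp
  have hmonic : p.Monic :=
    Polynomial.monic_multiset_prod_of_monic _ _ fun a _ => Polynomial.monic_X_sub_C a
  have hdeg : p.natDegree = n := by
    rw [hp, Polynomial.natDegree_multiset_prod_X_sub_C_eq_card]
  have hproots : p.roots = s := Polynomial.roots_multiset_prod_X_sub_C s
  set q := Polynomial.derivative p with hq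
  have hcoeffq : q.coeff (n - 1) = (n : ℝ) := by
    rw [hq, Polynomial.coeff_derivative]
    have h1 : n - 1 + 1 = n := by omega
    have hc : p.coeff n = 1 := by rw [← hdeg]; exact hmonic.coeff_natDegree
    rw [h1, hc, one_mul, Nat.cast_sub (by omega : 1 ≤ n), Nat.cast_one]
    ring
  have hqdeg : q.natDegree = n - 1 := by
    refine le_antisymm ?_ ?_
    · calc q.natDegree ≤ p.natDegree - 1 := Polynomial.natDegree_derivative_le p
        _ = n - 1 := by omega
    · exact Polynomial.le_natDegree_of_ne_zero (by
        rw [hcoeffq]; positivity)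
  have hqlead : q.leadingCoeff = (n : ℝ) := by
    rw [Polynomial.leadingCoeff, hqdeg, hcoeffq]
  have hqroots_card : Multiset.card q.roots = n - 1 := by
    have h1 : Multiset.card q.roots ≤ n - 1 := hqdeg ▸ Polynomial.card_roots' q
    have h2 := Polynomial.card_roots_le_derivative p
    rw [hproots, ← hq] at h2
    omega
  set t := q.roots with ht
  have hqeq : Polynomial.C (n : ℝ) *
      (t.map fun a => Polynomial.X - Polynomial.C a).prod = q := by
    rw [← hqlead]
    exact Polynomial.C_leadingCoeff_mul_prod_multiset_X_sub_C (by rw [hqroots_card, hqdeg])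
  refine ⟨t, hqroots_card, ?_⟩
  intro j hj
  -- key esymm relation
  have key : (n : ℝ) * t.esymm j = ((n - j : ℕ) : ℝ) * s.esymm j := by
    have c1 : q.coeff (n - 1 - j) = p.coeff (n - j) * ((n - j : ℕ) : ℝ) := by
      rw [hq, Polynomial.coeff_derivative]
      have h1 : n - 1 - j + 1 = n - j := by omega
      rw [h1]
      have e : ((n - 1 - j : ℕ) : ℝ) + 1 = ((n - j : ℕ) : ℝ) := by
        exact_mod_cast congrArg (fun m : ℕ => (m : ℝ)) (by omega : n - 1 - j + 1 = n - j)
      rw [e]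
    have c2 : p.coeff (n - j) = (-1 : ℝ) ^ j * s.esymm j := by
      have := Multiset.prod_X_sub_C_coeff s (by omega : n - j ≤ Multiset.card s)
      rw [← hns] at this
      have h2 : n - (n - j) = j := by omega
      rw [h2] at this
      exact this
    have c3 : q.coeff (n - 1 - j) = (n : ℝ) * ((-1 : ℝ) ^ j * t.esymm j) := by
      rw [← hqeq, Polynomial.coeff_C_mul]
      have := Multiset.prod_X_sub_C_coeff t
        (by rw [hqroots_card]; omega : n - 1 - j ≤ Multiset.card t)
      rw [hqroots_card] at this
      have h3 : n - 1 - (n - 1 - j) = j := by omega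
      rw [h3] at this
      rw [this]
    have hthis := c3.symm.trans c1
    rw [c2] at hthis
    have hsign : ((-1 : ℝ) ^ j) ≠ 0 := by positivity
    have h4 : ((-1:ℝ) ^ j) * ((n : ℝ) * t.esymm j)
        = ((-1:ℝ) ^ j) * (((n - j : ℕ) : ℝ) * s.esymm j) := by
      linear_combination hthis
    exact mul_left_cancel₀ hsign h4
  -- conclude Hm equality
  have hpos1 : (0 : ℝ) < (n.choose j : ℝ) := by
    exact_mod_cast Nat.cast_pos.mpr (Nat.choose_pos (by omega))
  have hpos2 : (0 : ℝ) < ((n-1).choose j : ℝ) := by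
    exact_mod_cast Nat.cast_pos.mpr (Nat.choose_pos (by omega))
  rw [Hm, Hm, hqroots_card, ← hns]
  rw [div_eq_div_iff (by positivity) (by positivity)]
  have hchoose : ((n - j : ℕ) : ℝ) * (n.choose j : ℝ) = (n : ℝ) * ((n-1).choose j : ℝ) := by
    exact_mod_cast congrArg (fun x : ℕ => (x : ℝ)) (choose_id (by omega))
  have hn0 : (0:ℝ) < (n : ℝ) := by exact_mod_cast (by omega : 0 < n)
  apply mul_left_cancel₀ (ne_of_gt hn0)
  linear_combination hchoose * s.esymm j + key * (n.choose j : ℝ)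
lemma hm_top (s : Multiset ℝ) : Hm (Multiset.card s) s = s.prod := by
  rw [Hm, Nat.choose_self, Nat.cast_one, div_one, esymm_card]

lemma base (u : Multiset ℝ) (h2 : 2 ≤ Multiset.card u) :
    Hm (Multiset.card u - 2) u * Hm (Multiset.card u) u ≤ Hm (Multiset.card u - 1) u ^ 2 ∧
    (Hm (Multiset.card u - 1) u ^ 2 = Hm (Multiset.card u - 2) u * Hm (Multiset.card u) u →
      u.prod ≠ 0 → ∃ c, u = Multiset.replicate (Multiset.card u) c) := by
  classical
  set m := Multiset.card u with hmu
  set M : ℝ := (m : ℝ) with hM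
  have hM2 : (2:ℝ) ≤ M := by rw [hM]; exact_mod_cast h2
  have hM0 : (0:ℝ) < M := by linarith
  have hM1 : (0:ℝ) < M - 1 := by linarith
  rw [hm_top]
  by_cases hP : u.prod = 0
  · refine ⟨?_, fun _ hP' => absurd hP hP'⟩
    rw [hP, mul_zero]
    positivity
  · -- all elements nonzero
    have hnz : ∀ a ∈ u, a ≠ 0 := by
      intro a ha h0
      exact hP (Multiset.prod_eq_zero (h0 ▸ ha))
    set v : Multiset ℝ := u.map (fun a => a⁻¹) with hv
    have hcv : Multiset.card v = m := by rw [hv, Multiset.card_map]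
    set S : ℝ := v.sum with hS
    set Q : ℝ := (v.map (fun a => a ^ 2)).sum with hQ
    set P : ℝ := u.prod with hPdef
    have hcs : S ^ 2 ≤ M * Q := by
      have := cs v
      rwa [hcv, ← hS, ← hQ] at this
    have r1 : M * Hm (m - 1) u = P * S := by
      have h := esymm_inv u hnz 1 (by omega)
      rw [esymm_one, ← hv, ← hS, ← hPdef, ← hmu] at h
      have hch : (m.choose (m - 1) : ℝ) = M := by
        rw [Nat.choose_symm (by omega : 1 ≤ m), Nat.choose_one_right]
      rw [Hm, ← hmu, hch, ← h]
      field_simp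
    have r2 : M * (M - 1) * Hm (m - 2) u = P * (S ^ 2 - Q) := by
      have h := esymm_inv u hnz 2 (by omega)
      rw [← hv, ← hPdef, ← hmu] at h
      have hsq := sq_sum v
      rw [← hS, ← hQ] at hsq
      have hch : (m.choose (m - 2) : ℝ) = M * (M - 1) / 2 := by
        rw [Nat.choose_symm (by omega : 2 ≤ m), Nat.cast_choose_two]
      have hv2 : v.esymm 2 = (S ^ 2 - Q) / 2 := by linarith
      rw [hv2] at h
      rw [Hm, ← hmu, hch, ← h]
      field_simp
      try ring
    constructor
    · -- inequality
      have hH1 : Hm (m - 1) u = P * S / M := by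
        field_simp at r1 ⊢
        linarith [r1]
      have hH2 : Hm (m - 2) u = P * (S ^ 2 - Q) / (M * (M - 1)) := by
        rw [eq_div_iff (by positivity)]
        linarith [r2]
      rw [hH1, hH2, div_mul_eq_mul_div, div_pow, div_le_div_iff₀ (by positivity) (by positivity)]
      have hint : (0:ℝ) ≤ M * (P ^ 2 * (M * Q - S ^ 2)) :=
        mul_nonneg (by positivity) (mul_nonneg (sq_nonneg P) (by linarith))
      nlinarith [hint]
    · -- equality case
      intro heq _
      have hP2 : (0:ℝ) < P ^ 2 := (sq_nonneg P).lt_of_ne' (pow_ne_zero 2 hP)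
      have hzero : P ^ 2 * (M * Q - S ^ 2) = 0 := by
        linear_combination (M^2*(M-1)) * heq - (M-1)*(M*Hm (m-1) u + P*S) * r1 + M*P * r2
      have hQS : S ^ 2 = M * Q := by
        have := mul_eq_zero.1 hzero
        rcases this with h | h
        · exact absurd h (ne_of_gt hP2)
        · linarith
      have hvne : v ≠ 0 := by
        intro h0
        rw [h0] at hcv
        simp at hcv
        omega
      obtain ⟨d, hd⟩ := cs_eq (by rw [hcv, ← hS, ← hQ]; exact hQS) hvne
      rw [hcv] at hd
      refine ⟨d⁻¹, ?_⟩
      have : u = v.map (fun a => a⁻¹) := by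
        rw [hv, Multiset.map_map]
        conv_lhs => rw [← Multiset.map_id u]
        exact Multiset.map_congr rfl fun a _ => by simp
      rw [this, hd, Multiset.map_replicate]
lemma hm_one_replicate {N : ℕ} (hN : 1 ≤ N) (c : ℝ) : Hm 1 (Multiset.replicate N c) = c := by
  have hN0 : ((N:ℝ)) ≠ 0 := by positivity
  rw [Hm, esymm_one, Multiset.sum_replicate, Multiset.card_replicate, Nat.choose_one_right,
    nsmul_eq_mul]
  field_simp

lemma hm_two_replicate {N : ℕ} (hN : 2 ≤ N) (c : ℝ) : Hm 2 (Multiset.replicate N c) = c ^ 2 := by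
  have hsq := sq_sum (Multiset.replicate N c)
  rw [Multiset.map_replicate, Multiset.sum_replicate, Multiset.sum_replicate,
    nsmul_eq_mul, nsmul_eq_mul] at hsq
  have he2 : (Multiset.replicate N c).esymm 2 = (N:ℝ) * ((N:ℝ) - 1) / 2 * c ^ 2 := by
    linear_combination -hsq / 2
  have hN0 : ((N:ℝ)) ≠ 0 := by positivity
  have hN1 : ((N:ℝ)) - 1 ≠ 0 := by
    have : (2:ℝ) ≤ (N:ℝ) := by exact_mod_cast hN
    intro h; linarith
  rw [Hm, Multiset.card_replicate, Nat.cast_choose_two, he2]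
  field_simp
  try ring

lemma to_replicate {s : Multiset ℝ} {c : ℝ} (h2 : 2 ≤ Multiset.card s)
    (h1 : Hm 1 s = c) (hsq : Hm 2 s = c ^ 2) :
    s = Multiset.replicate (Multiset.card s) c := by
  set n := Multiset.card s with hns
  set N : ℝ := (n : ℝ) with hNd
  have hN0 : (0:ℝ) < N := by
    rw [hNd]; exact_mod_cast (by omega : 0 < n)
  have hN1 : (0:ℝ) < N - 1 := by
    have : (2:ℝ) ≤ N := by rw [hNd]; exact_mod_cast h2
    linarith
  have hS : s.sum = N * c := by
    rw [Hm, esymm_one, ← hns, Nat.choose_one_right] at h1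
    field_simp at h1
    linarith
  have he2 : s.esymm 2 = N * (N - 1) / 2 * c ^ 2 := by
    rw [Hm, ← hns, Nat.cast_choose_two] at hsq
    rw [div_eq_iff (by positivity)] at hsq
    rw [hsq, hNd]
    ring
  have hQ : (s.map (fun b => b ^ 2)).sum = N * c ^ 2 := by
    have := sq_sum s
    rw [hS, he2] at this
    linear_combination -this
  have hzero : (s.map (fun b => (c - b) ^ 2)).sum = 0 := by
    rw [expand_sum, hS, hQ, ← hns]
    ring
  have hall : ∀ b ∈ s, b = c := by
    intro b hb
    have hnn : ∀ y ∈ s.map (fun b => (c - b) ^ 2), (0:ℝ) ≤ y := by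
      intro y hy
      obtain ⟨x, -, rfl⟩ := Multiset.mem_map.1 hy
      positivity
    have hmem : (c - b) ^ 2 ∈ s.map (fun b => (c - b) ^ 2) :=
      Multiset.mem_map.2 ⟨b, hb, rfl⟩
    have hle : (c - b) ^ 2 ≤ 0 := hzero ▸ Multiset.single_le_sum hnn _ hmem
    have : (c - b) ^ 2 = 0 := le_antisymm hle (by positivity)
    have := pow_eq_zero_iff (two_ne_zero) |>.1 this
    linarith [sub_eq_zero.1 this]
  exact Multiset.eq_replicate.2 ⟨rfl, hall⟩

lemma newton_main (d : ℕ) : ∀ (s : Multiset ℝ) (j : ℕ), 1 ≤ j →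
    Multiset.card s = j + 1 + d →
    Hm (j-1) s * Hm (j+1) s ≤ Hm j s ^ 2 ∧
    (Hm j s ^ 2 = Hm (j-1) s * Hm (j+1) s → Hm (j+1) s ≠ 0 →
      ∃ c, s = Multiset.replicate (Multiset.card s) c) := by
  induction d with
  | zero =>
      intro s j hj hcard
      have h := base s (by omega)
      have e1 : Multiset.card s - 1 = j := by omega
      have e2 : Multiset.card s - 2 = j - 1 := by omega
      have e3 : Hm (Multiset.card s) s = Hm (j+1) s := by rw [hcard]
      rw [e1, e2, e3] at h
      refine ⟨h.1, fun heq hne => ?_⟩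
      apply h.2 heq
      rw [← hm_top s, hcard]
      exact hne
  | succ d ih =>
      intro s j hj hcard
      obtain ⟨t, hct, hpres⟩ := deriv_step s (by omega)
      have hcardt : Multiset.card t = j + 1 + d := by omega
      have p1 : Hm (j-1) t = Hm (j-1) s := hpres _ (by omega)
      have p2 : Hm j t = Hm j s := hpres _ (by omega)
      have p3 : Hm (j+1) t = Hm (j+1) s := hpres _ (by omega)
      obtain ⟨ineq, eqc⟩ := ih t j hj hcardt
      rw [p1, p2, p3] at ineq eqc
      refine ⟨ineq, fun heq hne => ?_⟩
      obtain ⟨c, hc⟩ := eqc heq hne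
      rw [hcardt] at hc
      have q1 : Hm 1 s = c := by
        rw [← hpres 1 (by omega), hc, hm_one_replicate (by omega)]
      have q2 : Hm 2 s = c ^ 2 := by
        rw [← hpres 2 (by omega), hc, hm_two_replicate (by omega)]
      exact ⟨c, to_replicate (by omega) q1 q2⟩

end NewtonAux


open Finset

noncomputable def esymmOn {n : ℕ} (s : Finset (Fin n)) (k : ℕ) (κ : Fin n → ℝ) : ℝ :=
  ∑ A ∈ Finset.powersetCard k s, ∏ i ∈ A, κ i

noncomputable def esymm {n : ℕ} (k : ℕ) (κ : Fin n → ℝ) : ℝ :=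
  esymmOn Finset.univ k κ

/-- Normalized k-th elementary symmetric polynomial H_k = σ_k / C(n,k). -/
noncomputable def Hnorm {n : ℕ} (k : ℕ) (κ : Fin n → ℝ) : ℝ :=
  esymm k κ / (n.choose k : ℝ)

/-- Newton–MacLaurin inequality with equality characterization. -/
theorem stmt4 {n k l : ℕ} (κ : Fin n → ℝ) (hk : 1 ≤ k) (hkl : k < l) (hl : l ≤ n)
    (hpos : ∀ j, 1 ≤ j → j ≤ l → 0 < Hnorm j κ) :
    Hnorm k κ * Hnorm (l - 1) κ ≥ Hnorm (k - 1) κ * Hnorm l κ ∧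
      (Hnorm k κ * Hnorm (l - 1) κ = Hnorm (k - 1) κ * Hnorm l κ ↔
        ∃ c : ℝ, 0 < c ∧ κ = fun _ => c) := by
  classical
  have hn2 : 2 ≤ n := by omega
  set s : Multiset ℝ := Multiset.map κ Finset.univ.val with hsdef
  have hcs : Multiset.card s = n := by simp [hsdef]
  have hbr : ∀ j, Hnorm j κ = NewtonAux.Hm j s := by
    intro j
    rw [Hnorm, NewtonAux.Hm, hcs]
    congr 1
    rw [esymm, esymmOn, hsdef, Finset.esymm_map_val]
  have hH0 : Hnorm 0 κ = 1 := by
    simp [Hnorm, esymm, esymmOn]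
  have hPos : ∀ j, j ≤ l → 0 < Hnorm j κ := by
    intro j hj
    rcases Nat.eq_zero_or_pos j with rfl | hj1
    · rw [hH0]; norm_num
    · exact hpos j hj1 hj
  have newton : ∀ j, 1 ≤ j → j + 1 ≤ l →
      Hnorm (j-1) κ * Hnorm (j+1) κ ≤ Hnorm j κ ^ 2 := by
    intro j h1 h2
    have hc : Multiset.card s = j + 1 + (n - (j+1)) := by omega
    have h := (NewtonAux.newton_main (n - (j+1)) s j h1 hc).1
    rw [← hbr, ← hbr, ← hbr] at h
    exact h
  have hstep : ∀ j, 1 ≤ j → j + 1 ≤ l →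
      Hnorm (j+1) κ / Hnorm j κ ≤ Hnorm j κ / Hnorm (j-1) κ := by
    intro j h1 h2
    have hd1 : 0 < Hnorm j κ := hPos j (by omega)
    have hd2 : 0 < Hnorm (j-1) κ := hPos (j-1) (by omega)
    rw [div_le_div_iff₀ hd1 hd2]
    calc Hnorm (j+1) κ * Hnorm (j-1) κ = Hnorm (j-1) κ * Hnorm (j+1) κ := by ring
      _ ≤ Hnorm j κ ^ 2 := newton j h1 h2
      _ = Hnorm j κ * Hnorm j κ := sq (Hnorm j κ)
  have hanti : ∀ b a, 1 ≤ a → a ≤ b → b ≤ l →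
      Hnorm b κ / Hnorm (b-1) κ ≤ Hnorm a κ / Hnorm (a-1) κ := by
    intro b
    induction b with
    | zero => intro a h1 h2 h3; omega
    | succ b ihb =>
        intro a h1 h2 h3
        rcases Nat.lt_or_ge a (b+1) with hlt | hge
        · have hb1 : 1 ≤ b := by omega
          refine le_trans ?_ (ihb a h1 (by omega) (by omega))
          have := hstep b hb1 (by omega)
          rwa [Nat.add_sub_cancel]
        · have ha : a = b + 1 := by omega
          subst ha
          exact le_refl _
  have hd_k : 0 < Hnorm k κ := hPos k (by omega)
  have hd_k1 : 0 < Hnorm (k-1) κ := hPos (k-1) (by omega)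
  have hd_l : 0 < Hnorm l κ := hPos l le_rfl
  have hd_l1 : 0 < Hnorm (l-1) κ := hPos (l-1) (by omega)
  have hrkl : Hnorm l κ / Hnorm (l-1) κ ≤ Hnorm k κ / Hnorm (k-1) κ :=
    hanti l k hk (by omega) le_rfl
  have main_ineq : Hnorm (k-1) κ * Hnorm l κ ≤ Hnorm k κ * Hnorm (l-1) κ := by
    rw [div_le_div_iff₀ hd_l1 hd_k1] at hrkl
    linarith
  refine ⟨main_ineq, ?_, ?_⟩
  · intro heq
    have hrk_eq : Hnorm k κ / Hnorm (k-1) κ = Hnorm l κ / Hnorm (l-1) κ := by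
      rw [div_eq_div_iff (ne_of_gt hd_k1) (ne_of_gt hd_l1)]
      linarith
    have h1 : Hnorm (k+1) κ / Hnorm k κ ≤ Hnorm k κ / Hnorm (k-1) κ := hstep k hk hkl
    have h2 : Hnorm l κ / Hnorm (l-1) κ ≤ Hnorm (k+1) κ / Hnorm k κ := by
      have := hanti l (k+1) (by omega) (by omega) le_rfl
      rwa [Nat.add_sub_cancel] at this
    have hre : Hnorm (k+1) κ / Hnorm k κ = Hnorm k κ / Hnorm (k-1) κ :=
      le_antisymm h1 (by rw [hrk_eq]; exact h2)
    have heqN : Hnorm k κ ^ 2 = Hnorm (k-1) κ * Hnorm (k+1) κ := by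
      rw [div_eq_div_iff (ne_of_gt hd_k) (ne_of_gt hd_k1)] at hre
      linear_combination -hre
    have hc : Multiset.card s = k + 1 + (n - (k+1)) := by omega
    have eqc := (NewtonAux.newton_main (n - (k+1)) s k hk hc).2
    rw [← hbr, ← hbr, ← hbr] at eqc
    obtain ⟨c, hcrep⟩ := eqc heqN (ne_of_gt (hPos (k+1) (by omega)))
    have hceq : ∀ i, κ i = c := by
      intro i
      have hmem : κ i ∈ s := by
        rw [hsdef]
        exact Multiset.mem_map.2 ⟨i, (by simp), rfl⟩
      rw [hcrep] at hmem
      exact Multiset.eq_of_mem_replicate hmem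
    have hcpos : 0 < c := by
      have h1p := hPos 1 (by omega)
      rw [hbr 1, hcrep, hcs, NewtonAux.hm_one_replicate (by omega)] at h1p
      exact h1p
    exact ⟨c, hcpos, funext hceq⟩
  · rintro ⟨c, hcpos, rfl⟩
    have hval : ∀ j, j ≤ n → Hnorm j (fun _ : Fin n => c) = c ^ j := by
      intro j hj
      have hch : (0:ℝ) < (n.choose j : ℝ) := by
        exact_mod_cast Nat.choose_pos hj
      rw [Hnorm, esymm, esymmOn]
      rw [Finset.sum_congr rfl (fun A hA => by
        rw [Finset.prod_const, (Finset.mem_powersetCard.1 hA).2])]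
      rw [Finset.sum_const, Finset.card_powersetCard, Finset.card_univ, Fintype.card_fin,
        nsmul_eq_mul]
      field_simp
    rw [hval k (by omega), hval (l-1) (by omega), hval (k-1) (by omega), hval l (by omega),
      ← pow_add, ← pow_add]
    congr 1
    omega
end

section
/- For κ in the positive cone Γ_+ = {κ ∈ ℝⁿ : κ_i > 0 for all i} and any 1 ≤ k ≤ n, the function κ ↦ σ_k(κ)/σ_{k-1}(κ) is concave on Γ_+. -/
open Finset

/-! ### Auxiliary lemmas -/

lemma esymmOn_zero {n : ℕ} (s : Finset (Fin n)) (κ : Fin n → ℝ) : esymmOn s 0 κ = 1 := by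
  simp [esymmOn]

lemma esymmOn_one {n : ℕ} (s : Finset (Fin n)) (κ : Fin n → ℝ) :
    esymmOn s 1 κ = ∑ i ∈ s, κ i := by
  simp [esymmOn, powersetCard_one, Finset.sum_map]

lemma esymmOn_pos {n : ℕ} {s : Finset (Fin n)} {k : ℕ} (hk : k ≤ s.card)
    {κ : Fin n → ℝ} (hκ : ∀ i, 0 < κ i) : 0 < esymmOn s k κ := by
  unfold esymmOn
  apply Finset.sum_pos
  · intro A _; exact Finset.prod_pos fun i _ => hκ i
  · obtain ⟨t, hts, htc⟩ := Finset.exists_subset_card_eq hk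
    exact ⟨t, Finset.mem_powersetCard.2 ⟨hts, htc⟩⟩

/-- Deletion identity: `E_{m+1}(s) = E_{m+1}(s∖i) + κᵢ E_m(s∖i)`. -/
lemma esymmOn_erase {n : ℕ} {s : Finset (Fin n)} {i : Fin n} (hi : i ∈ s) (m : ℕ)
    (κ : Fin n → ℝ) :
    esymmOn s (m+1) κ = esymmOn (s.erase i) (m+1) κ + κ i * esymmOn (s.erase i) m κ := by
  classical
  conv_lhs => rw [← Finset.insert_erase hi]
  unfold esymmOn
  rw [Finset.powersetCard_succ_insert (Finset.notMem_erase i s), Finset.sum_union,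
    Finset.sum_image, Finset.mul_sum]
  · congr 1
    refine Finset.sum_congr rfl fun B hB => ?_
    have hiB : i ∉ B := fun h => Finset.notMem_erase i s ((Finset.mem_powersetCard.1 hB).1 h)
    exact Finset.prod_insert hiB
  · intro B hB C hC hBC
    have hiB : i ∉ B := fun h => Finset.notMem_erase i s ((Finset.mem_powersetCard.1 hB).1 h)
    have hiC : i ∉ C := fun h => Finset.notMem_erase i s ((Finset.mem_powersetCard.1 hC).1 h)
    have := congrArg (Finset.erase · i) hBC
    simpa [Finset.erase_insert hiB, Finset.erase_insert hiC] using this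
  · rw [Finset.disjoint_left]
    intro A hA hA'
    obtain ⟨B, hB, rfl⟩ := Finset.mem_image.1 hA'
    exact Finset.notMem_erase i s ((Finset.mem_powersetCard.1 hA).1 (Finset.mem_insert_self i B))

/-- Multiplicity identity: `∑_{i∈s} κᵢ E_m(s∖i) = (m+1) E_{m+1}(s)`. -/
lemma esymmOn_mul_identity {n : ℕ} (s : Finset (Fin n)) (m : ℕ) (κ : Fin n → ℝ) :
    ∑ i ∈ s, κ i * esymmOn (s.erase i) m κ = (m+1 : ℝ) * esymmOn s (m+1) κ := by
  classical
  have rhs : (m+1 : ℝ) * esymmOn s (m+1) κ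
      = ∑ A ∈ s.powersetCard (m+1), ∑ i ∈ A, κ i * ∏ j ∈ A.erase i, κ j := by
    unfold esymmOn; rw [Finset.mul_sum]
    refine Finset.sum_congr rfl fun A hA => ?_
    have hcard : A.card = m+1 := (Finset.mem_powersetCard.1 hA).2
    calc (m+1:ℝ) * ∏ j ∈ A, κ j = ∑ _i ∈ A, ∏ j ∈ A, κ j := by
          rw [Finset.sum_const, hcard]; ring
      _ = ∑ i ∈ A, κ i * ∏ j ∈ A.erase i, κ j :=
          Finset.sum_congr rfl fun i hi => (Finset.mul_prod_erase A κ hi).symm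
  have lhs : ∑ i ∈ s, κ i * esymmOn (s.erase i) m κ
      = ∑ i ∈ s, ∑ B ∈ (s.erase i).powersetCard m, κ i * ∏ j ∈ B, κ j := by
    refine Finset.sum_congr rfl fun i _ => ?_
    unfold esymmOn; rw [Finset.mul_sum]
  rw [rhs, lhs,
    Finset.sum_sigma' s (fun i => (s.erase i).powersetCard m) (fun i B => κ i * ∏ j ∈ B, κ j),
    ← Finset.sum_sigma (s.powersetCard (m+1)) (fun A => A)
      (fun p => κ p.2 * ∏ j ∈ p.1.erase p.2, κ j)]
  refine Finset.sum_nbij' (fun p => ⟨insert p.1 p.2, p.1⟩) (fun q => ⟨q.2, q.1.erase q.2⟩)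
    ?_ ?_ ?_ ?_ ?_
  · rintro ⟨i, B⟩ hp
    simp only [Finset.mem_sigma] at hp ⊢
    obtain ⟨his, hB⟩ := hp
    obtain ⟨hBsub, hBcard⟩ := Finset.mem_powersetCard.1 hB
    have hiB : i ∉ B := fun h => Finset.notMem_erase i s (hBsub h)
    refine ⟨Finset.mem_powersetCard.2 ⟨?_, ?_⟩, Finset.mem_insert_self i B⟩
    · exact Finset.insert_subset his (hBsub.trans (Finset.erase_subset i s))
    · rw [Finset.card_insert_of_notMem hiB, hBcard]
  · rintro ⟨A, i⟩ hq
    simp only [Finset.mem_sigma] at hq ⊢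
    obtain ⟨hA, hiA⟩ := hq
    obtain ⟨hAsub, hAcard⟩ := Finset.mem_powersetCard.1 hA
    refine ⟨hAsub hiA, Finset.mem_powersetCard.2 ⟨?_, ?_⟩⟩
    · exact fun j hj => Finset.mem_erase.2 ⟨(Finset.mem_erase.1 hj).1,
        hAsub (Finset.mem_of_mem_erase hj)⟩
    · rw [Finset.card_erase_of_mem hiA, hAcard]; rfl
  · rintro ⟨i, B⟩ hp
    simp only [Finset.mem_sigma] at hp
    have hiB : i ∉ B := fun h =>
      Finset.notMem_erase i s ((Finset.mem_powersetCard.1 hp.2).1 h)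
    simp [Finset.erase_insert hiB]
  · rintro ⟨A, i⟩ hq
    simp only [Finset.mem_sigma] at hq
    simp [Finset.insert_erase hq.2]
  · rintro ⟨i, B⟩ hp
    simp only [Finset.mem_sigma] at hp
    have hiB : i ∉ B := fun h =>
      Finset.notMem_erase i s ((Finset.mem_powersetCard.1 hp.2).1 h)
    simp [Finset.erase_insert hiB]

/-! ### Harmonic-mean lemmas -/

lemma combo_pos {a b u v : ℝ} (ha : 0 ≤ a) (hb : 0 ≤ b) (hab : a + b = 1)
    (hu : 0 < u) (hv : 0 < v) : 0 < a * u + b * v := by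
  rcases ha.lt_or_eq with h | h
  · nlinarith [mul_pos h hu, mul_nonneg hb hv.le]
  · have hb1 : b = 1 := by linarith
    rw [← h, hb1]; nlinarith

lemma harm_mono {p q q' : ℝ} (hp : 0 < p) (hq : 0 < q) (hqq' : q ≤ q') :
    p * q / (p + q) ≤ p * q' / (p + q') := by
  have hq' : 0 < q' := lt_of_lt_of_le hq hqq'
  rw [div_le_div_iff₀ (by positivity) (by positivity)]
  nlinarith [mul_nonneg (mul_pos hp hp).le (sub_nonneg.2 hqq')]

lemma harm_concave {a b p1 q1 p2 q2 : ℝ} (ha : 0 ≤ a) (hb : 0 ≤ b) (hab : a + b = 1)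
    (hp1 : 0 < p1) (hq1 : 0 < q1) (hp2 : 0 < p2) (hq2 : 0 < q2) :
    a * (p1 * q1 / (p1 + q1)) + b * (p2 * q2 / (p2 + q2)) ≤
      (a * p1 + b * p2) * (a * q1 + b * q2) / ((a * p1 + b * p2) + (a * q1 + b * q2)) := by
  have h1 : (0:ℝ) < p1 + q1 := by positivity
  have h2 : (0:ℝ) < p2 + q2 := by positivity
  have hP : (0:ℝ) < (a * p1 + b * p2) + (a * q1 + b * q2) := by
    have := combo_pos ha hb hab hp1 hp2
    have := combo_pos ha hb hab hq1 hq2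
    linarith
  simp only [mul_div_assoc']
  rw [div_add_div _ _ (ne_of_gt h1) (ne_of_gt h2), div_le_div_iff₀ (by positivity) hP]
  have hb' : b = 1 - a := by linarith
  subst hb'
  nlinarith [mul_nonneg (mul_nonneg ha hb) (sq_nonneg (p1 * q2 - p2 * q1))]

/-! ### Convexity framework lemmas -/

lemma cone_convex {n : ℕ} : Convex ℝ {κ : Fin n → ℝ | ∀ i, 0 < κ i} := by
  intro x hx y hy a b ha hb hab
  intro i
  have := combo_pos ha hb hab (hx i) (hy i)
  simpa using this

lemma concaveOn_congr_on {E : Type*} [AddCommMonoid E] [Module ℝ E] {S : Set E}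
    {f g : E → ℝ} (hf : ConcaveOn ℝ S f) (h : ∀ x ∈ S, f x = g x) : ConcaveOn ℝ S g := by
  refine ⟨hf.1, fun x hx y hy a b ha hb hab => ?_⟩
  rw [← h _ (hf.1 hx hy ha hb hab), ← h _ hx, ← h _ hy]
  exact hf.2 hx hy ha hb hab

lemma concaveOn_finset_sum {E ι : Type*} [AddCommMonoid E] [Module ℝ E] {S : Set E}
    (hS : Convex ℝ S) (t : Finset ι) {f : ι → E → ℝ}
    (h : ∀ i ∈ t, ConcaveOn ℝ S (f i)) :
    ConcaveOn ℝ S (fun x => ∑ i ∈ t, f i x) := by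
  classical
  induction t using Finset.induction with
  | empty => simpa using concaveOn_const (0:ℝ) hS
  | insert a t hni ih =>
    simp only [Finset.sum_insert hni]
    exact (h a (Finset.mem_insert_self a t)).add
      (ih fun i hi => h i (Finset.mem_insert_of_mem hi))

/-- Composition: `κ ↦ h(κᵢ, q κ)` is concave when `q` is concave and positive. -/
lemma harm_comp_concave {n : ℕ} {q : (Fin n → ℝ) → ℝ} (i : Fin n)
    (hq : ConcaveOn ℝ {κ : Fin n → ℝ | ∀ j, 0 < κ j} q)
    (hqpos : ∀ κ, (∀ j, 0 < κ j) → 0 < q κ) :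
    ConcaveOn ℝ {κ : Fin n → ℝ | ∀ j, 0 < κ j}
      (fun κ => κ i * q κ / (κ i + q κ)) := by
  refine ⟨cone_convex, ?_⟩
  intro x hx y hy a b ha hb hab
  have hz : (∀ j, 0 < (a • x + b • y) j) := cone_convex hx hy ha hb hab
  have hzi : (a • x + b • y) i = a * x i + b * y i := by simp
  have hqx := hqpos x hx
  have hqy := hqpos y hy
  have key1 := harm_concave ha hb hab (hx i) hqx (hy i) hqy
  have hcombo : 0 < a * q x + b * q y := combo_pos ha hb hab hqx hqy
  have hqz : a * q x + b * q y ≤ q (a • x + b • y) := by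
    simpa using hq.2 hx hy ha hb hab
  have key2 : (a * x i + b * y i) * (a * q x + b * q y) /
        ((a * x i + b * y i) + (a * q x + b * q y)) ≤
      (a • x + b • y) i * q (a • x + b • y) / ((a • x + b • y) i + q (a • x + b • y)) := by
    rw [hzi]
    exact harm_mono (by rw [← hzi]; exact hz i) hcombo hqz
  calc a • (x i * q x / (x i + q x)) + b • (y i * q y / (y i + q y))
      = a * (x i * q x / (x i + q x)) + b * (y i * q y / (y i + q y)) := by simp
    _ ≤ (a * x i + b * y i) * (a * q x + b * q y) /
          ((a * x i + b * y i) + (a * q x + b * q y)) := key1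
    _ ≤ _ := key2

/-- The Marcus–Lopes recursion identity on the positive cone. -/
lemma ratio_eq {n : ℕ} {s : Finset (Fin n)} {l : ℕ} (hcard : l + 2 ≤ s.card)
    {κ : Fin n → ℝ} (hκ : ∀ i, 0 < κ i) :
    esymmOn s (l+2) κ / esymmOn s (l+1) κ
      = (1 / ((l:ℝ)+2)) * ∑ i ∈ s,
          κ i * (esymmOn (s.erase i) (l+1) κ / esymmOn (s.erase i) l κ) /
            (κ i + esymmOn (s.erase i) (l+1) κ / esymmOn (s.erase i) l κ) := by
  have hE1 : 0 < esymmOn s (l+1) κ := esymmOn_pos (by omega) hκ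
  have hsum : ∀ i ∈ s,
      κ i * (esymmOn (s.erase i) (l+1) κ / esymmOn (s.erase i) l κ) /
        (κ i + esymmOn (s.erase i) (l+1) κ / esymmOn (s.erase i) l κ)
      = κ i * esymmOn (s.erase i) (l+1) κ / esymmOn s (l+1) κ := by
    intro i hi
    have hec : (s.erase i).card = s.card - 1 := Finset.card_erase_of_mem hi
    have hA : 0 < esymmOn (s.erase i) (l+1) κ := esymmOn_pos (by omega) hκ
    have hB : 0 < esymmOn (s.erase i) l κ := esymmOn_pos (by omega) hκ
    have hden : esymmOn s (l+1) κ
        = esymmOn (s.erase i) (l+1) κ + κ i * esymmOn (s.erase i) l κ :=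
      esymmOn_erase hi l κ
    rw [hden]
    have hκi := hκ i
    field_simp
    ring
  rw [Finset.sum_congr rfl hsum, ← Finset.sum_div]
  have := esymmOn_mul_identity s (l+1) κ
  push_cast at this
  rw [this]
  field_simp
  ring

/-- Concavity of `E_k/E_{k-1}` on the positive cone, for subsets. -/
lemma marcus_lopes {n : ℕ} (k : ℕ) : ∀ s : Finset (Fin n), 1 ≤ k → k ≤ s.card →
    ConcaveOn ℝ {κ : Fin n → ℝ | ∀ i, 0 < κ i}
      (fun κ => esymmOn s k κ / esymmOn s (k-1) κ) := by
  induction k with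
  | zero => intro s h; omega
  | succ l ih =>
    intro s _ hcard
    cases l with
    | zero =>
      have hlin : ConcaveOn ℝ {κ : Fin n → ℝ | ∀ i, 0 < κ i}
          (fun κ : Fin n → ℝ => ∑ i ∈ s, κ i) := by
        refine ⟨cone_convex, ?_⟩
        intro x hx y hy a b ha hb hab
        simp only [smul_eq_mul, Pi.add_apply, Pi.smul_apply]
        rw [Finset.sum_add_distrib, ← Finset.mul_sum, ← Finset.mul_sum]
      refine concaveOn_congr_on hlin fun κ _ => ?_
      simp [esymmOn_one, esymmOn_zero]
    | succ m =>
      have hstep : ConcaveOn ℝ {κ : Fin n → ℝ | ∀ i, 0 < κ i}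
          (fun κ => (1 / ((m:ℝ)+2)) * ∑ i ∈ s,
            κ i * (esymmOn (s.erase i) (m+1) κ / esymmOn (s.erase i) m κ) /
              (κ i + esymmOn (s.erase i) (m+1) κ / esymmOn (s.erase i) m κ)) := by
        have hsum : ConcaveOn ℝ {κ : Fin n → ℝ | ∀ i, 0 < κ i}
            (fun κ => ∑ i ∈ s,
              κ i * (esymmOn (s.erase i) (m+1) κ / esymmOn (s.erase i) m κ) /
                (κ i + esymmOn (s.erase i) (m+1) κ / esymmOn (s.erase i) m κ)) := by
          refine concaveOn_finset_sum cone_convex s fun i hi => ?_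
          have hec : (s.erase i).card = s.card - 1 := Finset.card_erase_of_mem hi
          have hq : ConcaveOn ℝ {κ : Fin n → ℝ | ∀ j, 0 < κ j}
              (fun κ => esymmOn (s.erase i) (m+1) κ / esymmOn (s.erase i) m κ) :=
            ih (s.erase i) (by omega) (by omega)
          exact harm_comp_concave i hq fun κ hκ =>
            div_pos (esymmOn_pos (by omega) hκ) (esymmOn_pos (by omega) hκ)
        have := hsum.smul (c := 1 / ((m:ℝ)+2)) (by positivity)
        simpa [smul_eq_mul] using this
      refine concaveOn_congr_on hstep fun κ hκ => ?_
      exact (ratio_eq hcard hκ).symm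

/-- σ_k/σ_{k-1} is concave on the positive cone Γ₊. -/
theorem stmt5 {n k : ℕ} (hk1 : 1 ≤ k) (hk : k ≤ n) :
    ConcaveOn ℝ {κ : Fin n → ℝ | ∀ i, 0 < κ i}
      (fun κ => esymm k κ / esymm (k - 1) κ) := by
  have := marcus_lopes (n := n) k Finset.univ hk1 (by simpa using hk)
  simpa [esymm] using this
end
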